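/- Let c ∈ ℝ and let z : ℤ → ℝ → ℝ be a family of differentiable functions with z_n(t) ≠ 0 for all n, t, satisfying for all n ∈ ℤ and t ∈ ℝ the equation ż_n = z_n ( z_{n+2}/z_{n−1} + z_{n+1}/z_{n−2} ) + c z_n. Define u_n(t) = z_{n+3}(t)/z_n(t). Then for all n ∈ ℤ and t ∈ ℝ, u̇_n = u_n (u_{n+2} + u_{n+1} − u_{n−1} − u_{n−2}), i.e., u solves the INB equation. -/

import Mathlib

/-- Equation `żₙ = zₙ(z_{n+2}/z_{n−1} + z_{n+1}/z_{n−2}) + c zₙ` is transformed into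
the INB equation by the third-order transformation `uₙ = z_{n+3}/zₙ`. -/
theorem stmt_11 (c : ℝ) (z : ℤ → ℝ → ℝ)
    (hzne : ∀ (n : ℤ) (t : ℝ), z n t ≠ 0)
    (hz : ∀ (n : ℤ) (t : ℝ), HasDerivAt (z n)
      (z n t * (z (n + 2) t / z (n - 1) t + z (n + 1) t / z (n - 2) t) + c * z n t) t)
    (u : ℤ → ℝ → ℝ)
    (hu : ∀ (n : ℤ) (t : ℝ), u n t = z (n + 3) t / z n t) :
    ∀ (n : ℤ) (t : ℝ), HasDerivAt (u n)
      (u n t * (u (n + 2) t + u (n + 1) t - u (n - 1) t - u (n - 2) t)) t := by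
  intro n t
  have hfun : u n = fun t => z (n + 3) t / z n t := funext (hu n)
  have h := (hz (n + 3) t).div (hz n t) (hzne n t)
  rw [hfun]
  show HasDerivAt (z (n + 3) / z n) _ t
  refine h.congr_deriv ?_
  simp only [hu]
  have e1 : n + 3 + 2 = n + 5 := by ring
  have e2 : n + 3 + 1 = n + 4 := by ring
  have e3 : n + 3 - 1 = n + 2 := by ring
  have e4 : n + 3 - 2 = n + 1 := by ring
  have e5 : n + 2 + 3 = n + 5 := by ring
  have e6 : n + 1 + 3 = n + 4 := by ring
  have e7 : n - 1 + 3 = n + 2 := by ring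
  have e8 : n - 2 + 3 = n + 1 := by ring
  rw [e1, e2, e3, e4, e5, e6, e7, e8]
  have A1 := hzne n t
  have A2 := hzne (n + 1) t
  have A3 := hzne (n + 2) t
  have A4 := hzne (n - 1) t
  have A5 := hzne (n - 2) t
  field_simp
  ring
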